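/- Let (k_n)_{n≥1} be a sequence of positive integers with partial sums s_n = k_1 + ⋯ + k_n. If for every nonincreasing sequence (d_j)_{j≥1} of strictly positive real numbers converging to zero one has limsup_{n→∞} (1/k_n)·∑_{j=1}^{s_n} d_j < ∞, then liminf_{n→∞} k_n/s_n > 0. -/

import Mathlib

open Filter

/-- Partial sums `s n = k 1 + ⋯ + k n` of a sequence of block sizes (with `s 0 = 0`). -/
def psum (k : ℕ → ℕ) (n : ℕ) : ℕ := ∑ j ∈ Finset.Icc 1 n, k j

set_option maxHeartbeats 1000000 in
/-- If for every nonincreasing strictly positive sequence `(d j)_{j ≥ 1}`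
converging to zero one has `limsup (1/k n) * ∑_{j=1}^{s n} d j < ∞` (i.e. these averages are
eventually bounded above), then `liminf k n / s n > 0`. -/
theorem liminf_ratio_pos_of_averages_bounded
    (k : ℕ → ℕ) (hk : ∀ n, 1 ≤ n → 1 ≤ k n)
    (h : ∀ d : ℕ → ℝ, (∀ j, 1 ≤ j → 0 < d j) → (∀ j, 1 ≤ j → d (j + 1) ≤ d j) →
      Filter.Tendsto d atTop (nhds 0) →
      ∃ M : ℝ, ∀ᶠ n in atTop, (∑ j ∈ Finset.Icc 1 (psum k n), d j) / (k n : ℝ) ≤ M) :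
    0 < Filter.liminf (fun n => (k n : ℝ) / (psum k n : ℝ)) atTop := by
  by_contra hL
  push_neg at hL
  -- basic facts about partial sums
  have s_mono : Monotone (psum k) := fun a b hab =>
    Finset.sum_le_sum_of_subset (Finset.Icc_subset_Icc_right hab)
  have s_ge : ∀ n, n ≤ psum k n := by
    intro n
    calc n = ∑ _j ∈ Finset.Icc 1 n, 1 := by simp
    _ ≤ psum k n := Finset.sum_le_sum fun j hj => hk j (Finset.mem_Icc.mp hj).1
  have fnonneg : ∀ n, (0:ℝ) ≤ (k n : ℝ) / (psum k n : ℝ) := fun n => by positivity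
  have hle1 : ∀ n, (k n : ℝ) / (psum k n : ℝ) ≤ 1 := by
    intro n
    rcases Nat.eq_zero_or_pos n with rfl | hn
    · simp [psum]
    · have hks : k n ≤ psum k n :=
        Finset.single_le_sum (f := k) (fun j _ => Nat.zero_le _)
          (Finset.mem_Icc.mpr ⟨hn, le_refl n⟩)
      have hs : (0:ℝ) < (psum k n : ℝ) := by
        have := le_trans (le_trans hn (s_ge n)) (le_refl _)
        exact_mod_cast lt_of_lt_of_le hn (s_ge n)
      rw [div_le_one hs]
      exact_mod_cast hks
  have hbdd : IsCoboundedUnder (· ≥ ·) atTop (fun n => (k n : ℝ) / (psum k n : ℝ)) :=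
    isCoboundedUnder_ge_of_le atTop hle1
  have hfreq : ∀ i : ℕ, ∃ᶠ n in atTop,
      1 ≤ n ∧ (k n : ℝ) / (psum k n : ℝ) < (1/((i:ℝ)+2))^2 := by
    intro i
    have h1 : Filter.liminf (fun n => (k n : ℝ) / (psum k n : ℝ)) atTop < (1/((i:ℝ)+2))^2 :=
      lt_of_le_of_lt hL (by positivity)
    have h2 := frequently_lt_of_liminf_lt hbdd h1
    exact (h2.and_eventually (eventually_ge_atTop 1)).mono fun n hn => ⟨hn.2, hn.1⟩
  obtain ⟨φ, hφmono, hφ⟩ := extraction_forall_of_frequently hfreq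
  -- the block index of j : the least i with j ≤ psum k (φ i)
  have hex : ∀ j : ℕ, ∃ i, j ≤ psum k (φ i) := fun j =>
    ⟨j, le_trans (hφmono.le_apply) (s_ge (φ j))⟩
  set idx : ℕ → ℕ := fun j => Nat.find (hex j) with hidx_def
  set d : ℕ → ℝ := fun j => 1/((idx j : ℝ)+2) with hd_def
  have hdpos : ∀ j, 1 ≤ j → 0 < d j := fun j _ => by positivity
  have hidx_mono : ∀ j, idx j ≤ idx (j+1) := by
    intro j
    exact Nat.find_mono fun i hi => le_trans (Nat.le_succ j) hi
  have hdmono : ∀ j, 1 ≤ j → d (j+1) ≤ d j := by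
    intro j _
    apply one_div_le_one_div_of_le (by positivity)
    have := hidx_mono j
    push_cast
    linarith [(Nat.cast_le (α := ℝ)).mpr this]
  have hidx_tendsto : Tendsto idx atTop atTop := by
    rw [tendsto_atTop]
    intro b
    rw [eventually_atTop]
    refine ⟨psum k (φ b) + 1, fun j hj => ?_⟩
    by_contra hlt
    push_neg at hlt
    have hspec : j ≤ psum k (φ (idx j)) := Nat.find_spec (hex j)
    have : psum k (φ (idx j)) ≤ psum k (φ b) :=
      s_mono (hφmono.monotone (le_of_lt hlt))
    omega
  have hdtend : Tendsto d atTop (nhds 0) := by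
    have hg : Tendsto (fun i : ℕ => 1/((i:ℝ)+2)) atTop (nhds 0) := by
      simp_rw [one_div]
      exact (tendsto_atTop_add_const_right _ 2 tendsto_natCast_atTop_atTop).inv_tendsto_atTop
    exact hg.comp hidx_tendsto
  obtain ⟨M, hM⟩ := h d hdpos hdmono hdtend
  rw [eventually_atTop] at hM
  obtain ⟨N, hN⟩ := hM
  set m := max N ⌈M⌉₊ with hm_def
  have hφmN : N ≤ φ m := le_trans (le_max_left _ _) hφmono.le_apply
  have hMn := hN (φ m) hφmN
  -- notation
  set n := φ m with hn_def
  have h1n : 1 ≤ n := (hφ m).1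
  have hflt : (k n : ℝ) / (psum k n : ℝ) < (1/((m:ℝ)+2))^2 := (hφ m).2
  have hKpos : (0:ℝ) < (k n : ℝ) := by exact_mod_cast hk n h1n
  have hSpos : (0:ℝ) < (psum k n : ℝ) := by
    have := le_trans h1n (s_ge n); exact_mod_cast this
  set c : ℝ := 1/((m:ℝ)+2) with hc_def
  have hcpos : 0 < c := by positivity
  have hcm : c * ((m:ℝ)+2) = 1 := by rw [hc_def]; field_simp
  -- lower bound each d j by c on the range
  have hdc : ∀ j ∈ Finset.Icc 1 (psum k n), c ≤ d j := by
    intro j hj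
    have hj2 : j ≤ psum k n := (Finset.mem_Icc.mp hj).2
    have hidxm : idx j ≤ m := Nat.find_min' (hex j) hj2
    apply one_div_le_one_div_of_le (by positivity)
    have : ((idx j : ℝ)) ≤ (m:ℝ) := by exact_mod_cast hidxm
    linarith
  have hsum : (psum k n : ℝ) * c ≤ ∑ j ∈ Finset.Icc 1 (psum k n), d j := by
    calc (psum k n : ℝ) * c = ∑ _j ∈ Finset.Icc 1 (psum k n), c := by
          rw [Finset.sum_const, Nat.card_Icc, nsmul_eq_mul]
          push_cast
          ring_nf
    _ ≤ ∑ j ∈ Finset.Icc 1 (psum k n), d j := Finset.sum_le_sum hdc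
  -- the key inequality : (m+2) ≤ S*c/K
  have hKlt : (k n : ℝ) < (1/((m:ℝ)+2))^2 * (psum k n : ℝ) :=
    (div_lt_iff₀ hSpos).mp hflt
  have hKlt' : (k n : ℝ) < c^2 * (psum k n : ℝ) := by rw [hc_def]; exact hKlt
  have hkey : ((m:ℝ)+2) * (k n : ℝ) ≤ (psum k n : ℝ) * c := by
    nlinarith [mul_lt_mul_of_pos_left hKlt' (show (0:ℝ) < (m:ℝ)+2 by positivity),
      hcm, hSpos, hcpos]
  have hkey2 : ((m:ℝ)+2) ≤ ((psum k n : ℝ) * c) / (k n : ℝ) :=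
    (le_div_iff₀ hKpos).mpr hkey
  have hdivle : ((psum k n : ℝ) * c) / (k n : ℝ) ≤
      (∑ j ∈ Finset.Icc 1 (psum k n), d j) / (k n : ℝ) := by
    gcongr
  have hMm : M ≤ (m:ℝ) := le_trans (Nat.le_ceil M)
    (by exact_mod_cast le_max_right N ⌈M⌉₊)
  linarith
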